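/- Let μ > 0 and λ ∈ ℝ with λ + μ > 0, and κ := (λ+3μ)/(λ+μ). For every k ∈ ℕ, the displacement field u(x) := r^{k/2} φ_k(θ), defined on the slit plane ℝ² \ {(t,0) : t ≤ 0} via r := |x| and θ := arg(x₁ + i x₂) ∈ (−π, π), is smooth there and satisfies Navier's equation μΔu + (λ+μ)∇(∇·u) = 0 on the slit plane. -/

import Mathlib

/-- The angular function `φ_k`. -/
noncomputable def phik (κ : ℝ) (k : ℕ) (θ : ℝ) : ℝ × ℝ :=
  (κ * Real.cos ((k : ℝ) * θ / 2) - ((k : ℝ) / 2) * Real.cos (((k : ℝ) / 2 - 2) * θ)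
      + ((k : ℝ) / 2 + (-1 : ℝ) ^ k) * Real.cos ((k : ℝ) * θ / 2),
   κ * Real.sin ((k : ℝ) * θ / 2) + ((k : ℝ) / 2) * Real.sin (((k : ℝ) / 2 - 2) * θ)
      - ((k : ℝ) / 2 + (-1 : ℝ) ^ k) * Real.sin ((k : ℝ) * θ / 2))

/-- The slit plane `ℝ² \ {(t,0) : t ≤ 0}`. -/
def slitSet : Set (ℝ × ℝ) := {p : ℝ × ℝ | ¬(p.2 = 0 ∧ p.1 ≤ 0)}

/-- The displacement field `u(x) = r^{k/2} φ_k(θ)` in polar coordinates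
`r = |x|`, `θ = arg(x₁ + i x₂) ∈ (−π, π)`. -/
noncomputable def uphi (κ : ℝ) (k : ℕ) (p : ℝ × ℝ) : ℝ × ℝ :=
  (Real.sqrt (p.1 ^ 2 + p.2 ^ 2) ^ ((k : ℝ) / 2))
    • phik κ k (Complex.arg ((p.1 : ℂ) + (p.2 : ℂ) * Complex.I))

/-- Partial derivative with respect to the first variable. -/
noncomputable def pd1R (f : ℝ × ℝ → ℝ) (p : ℝ × ℝ) : ℝ := fderiv ℝ f p (1, 0)

/-- Partial derivative with respect to the second variable. -/
noncomputable def pd2R (f : ℝ × ℝ → ℝ) (p : ℝ × ℝ) : ℝ := fderiv ℝ f p (0, 1)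

/-- Divergence of a planar field. -/
noncomputable def divR (u : ℝ × ℝ → ℝ × ℝ) (p : ℝ × ℝ) : ℝ :=
  pd1R (fun q => (u q).1) p + pd2R (fun q => (u q).2) p

open Complex

noncomputable def Zc (p : ℝ × ℝ) : ℂ := (p.1 : ℂ) + (p.2 : ℂ) * Complex.I

noncomputable def Lc : (ℝ × ℝ) →L[ℝ] ℂ := Complex.equivRealProdCLM.symm.toContinuousLinearMap

@[simp] lemma Zc_re (p : ℝ × ℝ) : (Zc p).re = p.1 := by simp [Zc]
@[simp] lemma Zc_im (p : ℝ × ℝ) : (Zc p).im = p.2 := by simp [Zc]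

lemma Lc_apply (v : ℝ × ℝ) : Lc v = (v.1 : ℂ) + (v.2 : ℂ) * Complex.I := by
  exact Complex.equivRealProdCLM_symm_apply v

lemma hasFDerivAt_Zc (p : ℝ × ℝ) : HasFDerivAt Zc Lc p := by
  have h : Zc = fun q => Lc q := by
    funext q; rw [Lc_apply]; rfl
  rw [h]
  exact Lc.hasFDerivAt

@[simp] lemma Lc_e1 : Lc (1, 0) = 1 := by rw [Lc_apply]; simp
@[simp] lemma Lc_e2 : Lc (0, 1) = Complex.I := by rw [Lc_apply]; simp

lemma slit_iff {p : ℝ × ℝ} : p ∈ slitSet ↔ Zc p ∈ Complex.slitPlane := by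
  rw [Complex.mem_slitPlane_iff]
  simp only [slitSet, Set.mem_setOf_eq, Zc_re, Zc_im]
  constructor
  · intro h
    by_cases h2 : p.2 = 0
    · left; push_neg at h; exact lt_of_not_ge (by simpa [h2] using h h2)
    · right; exact h2
  · rintro (h | h) ⟨h2, h1⟩
    · exact absurd h1 (not_le.mpr h)
    · exact h h2

lemma isOpen_slitSet : IsOpen slitSet := by
  have : slitSet = {p : ℝ × ℝ | p.2 = 0 ∧ p.1 ≤ 0}ᶜ := rfl
  rw [this]
  exact ((isClosed_eq continuous_snd continuous_const).inter
    (isClosed_le continuous_fst continuous_const)).isOpen_compl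

lemma Zc_ne_zero {p : ℝ × ℝ} (hp : p ∈ slitSet) : Zc p ≠ 0 :=
  Complex.slitPlane_ne_zero (slit_iff.mp hp)

noncomputable def Mab (a b : ℝ) (p : ℝ × ℝ) : ℂ :=
  Zc p ^ (a : ℂ) * (starRingEnd ℂ) (Zc p ^ (b : ℂ))

lemma hasFDerivAt_cpowZ (a : ℝ) {p : ℝ × ℝ} (hp : p ∈ slitSet) :
    HasFDerivAt (fun q => Zc q ^ (a : ℂ)) (((a : ℂ) * Zc p ^ ((a : ℂ) - 1)) • Lc) p :=
  ((Complex.hasStrictDerivAt_cpow_const (slit_iff.mp hp)).hasDerivAt).comp_hasFDerivAt p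
    (hasFDerivAt_Zc p)

lemma hasFDerivAt_conj_pow (b : ℝ) {p : ℝ × ℝ} (hp : p ∈ slitSet) :
    HasFDerivAt (fun q => (starRingEnd ℂ) (Zc q ^ (b : ℂ)))
      (Complex.conjCLE.toContinuousLinearMap.comp (((b : ℂ) * Zc p ^ ((b : ℂ) - 1)) • Lc)) p :=
  (Complex.conjCLE.toContinuousLinearMap.hasFDerivAt).comp p (hasFDerivAt_cpowZ b hp)

lemma hasFDerivAt_Mab (a b : ℝ) {p : ℝ × ℝ} (hp : p ∈ slitSet) :
    HasFDerivAt (Mab a b)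
      ((Zc p ^ (a : ℂ)) •
          (Complex.conjCLE.toContinuousLinearMap.comp (((b : ℂ) * Zc p ^ ((b : ℂ) - 1)) • Lc))
        + ((starRingEnd ℂ) (Zc p ^ (b : ℂ))) • (((a : ℂ) * Zc p ^ ((a : ℂ) - 1)) • Lc)) p :=
  (hasFDerivAt_cpowZ a hp).mul (hasFDerivAt_conj_pow b hp)

lemma diff_Mab (a b : ℝ) {p : ℝ × ℝ} (hp : p ∈ slitSet) :
    DifferentiableAt ℝ (Mab a b) p := (hasFDerivAt_Mab a b hp).differentiableAt

lemma pdx_Mab (a b : ℝ) {p : ℝ × ℝ} (hp : p ∈ slitSet) :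
    fderiv ℝ (Mab a b) p (1, 0) = (a:ℂ) * Mab (a-1) b p + (b:ℂ) * Mab a (b-1) p := by
  rw [(hasFDerivAt_Mab a b hp).fderiv]
  simp only [ContinuousLinearMap.add_apply, ContinuousLinearMap.smul_apply,
    ContinuousLinearMap.comp_apply, Lc_e1, ContinuousLinearEquiv.coe_coe,
    Complex.conjCLE_apply, map_mul, Complex.conj_ofReal, mul_one, smul_eq_mul,
    Mab]
  push_cast
  ring

lemma pdy_Mab (a b : ℝ) {p : ℝ × ℝ} (hp : p ∈ slitSet) :
    fderiv ℝ (Mab a b) p (0, 1)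
      = (a:ℂ) * Complex.I * Mab (a-1) b p - (b:ℂ) * Complex.I * Mab a (b-1) p := by
  rw [(hasFDerivAt_Mab a b hp).fderiv]
  simp only [ContinuousLinearMap.add_apply, ContinuousLinearMap.smul_apply,
    ContinuousLinearMap.comp_apply, Lc_e2, ContinuousLinearEquiv.coe_coe,
    Complex.conjCLE_apply, map_mul, Complex.conj_ofReal, Complex.conj_I, smul_eq_mul,
    Mab]
  push_cast
  ring

noncomputable def comb (l : List (ℂ × ℝ × ℝ)) (p : ℝ × ℝ) : ℂ :=
  (l.map fun t => t.1 * Mab t.2.1 t.2.2 p).sum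

noncomputable def dxL (l : List (ℂ × ℝ × ℝ)) : List (ℂ × ℝ × ℝ) :=
  l.flatMap fun t => [(t.1 * (t.2.1 : ℂ), t.2.1 - 1, t.2.2), (t.1 * (t.2.2 : ℂ), t.2.1, t.2.2 - 1)]

noncomputable def dyL (l : List (ℂ × ℝ × ℝ)) : List (ℂ × ℝ × ℝ) :=
  l.flatMap fun t => [(t.1 * (t.2.1 : ℂ) * Complex.I, t.2.1 - 1, t.2.2),
    (-(t.1 * (t.2.2 : ℂ) * Complex.I), t.2.1, t.2.2 - 1)]

@[simp] lemma comb_nil (p : ℝ × ℝ) : comb [] p = 0 := rfl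

lemma comb_cons (t : ℂ × ℝ × ℝ) (l : List (ℂ × ℝ × ℝ)) (p : ℝ × ℝ) :
    comb (t :: l) p = t.1 * Mab t.2.1 t.2.2 p + comb l p := by
  simp [comb]

lemma diff_comb (l : List (ℂ × ℝ × ℝ)) {p : ℝ × ℝ} (hp : p ∈ slitSet) :
    DifferentiableAt ℝ (comb l) p := by
  induction l with
  | nil =>
      have : comb ([] : List (ℂ × ℝ × ℝ)) = fun _ => (0 : ℂ) := by funext q; rfl
      rw [this]; exact differentiableAt_const _
  | cons t l ih =>
      have : comb (t :: l) = fun q => t.1 * Mab t.2.1 t.2.2 q + comb l q := by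
        funext q; exact comb_cons t l q
      rw [this]
      exact ((diff_Mab _ _ hp).const_mul _).add ih

lemma pdx_comb (l : List (ℂ × ℝ × ℝ)) {p : ℝ × ℝ} (hp : p ∈ slitSet) :
    fderiv ℝ (comb l) p (1, 0) = comb (dxL l) p := by
  induction l with
  | nil =>
      have : comb ([] : List (ℂ × ℝ × ℝ)) = fun _ => (0 : ℂ) := by funext q; rfl
      rw [this, fderiv_fun_const]; simp [dxL, comb]
  | cons t l ih =>
      have he : comb (t :: l) = fun q => t.1 * Mab t.2.1 t.2.2 q + comb l q := by
        funext q; exact comb_cons t l q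
      rw [he, fderiv_fun_add (((diff_Mab _ _ hp).const_mul _)) (diff_comb l hp),
        fderiv_const_mul (diff_Mab _ _ hp)]
      simp only [ContinuousLinearMap.add_apply, ContinuousLinearMap.smul_apply, smul_eq_mul]
      rw [pdx_Mab _ _ hp, ih]
      have : dxL (t :: l) = (t.1 * (t.2.1 : ℂ), t.2.1 - 1, t.2.2)
          :: (t.1 * (t.2.2 : ℂ), t.2.1, t.2.2 - 1) :: dxL l := by
        simp [dxL]
      rw [this, comb_cons, comb_cons]
      ring

lemma pdy_comb (l : List (ℂ × ℝ × ℝ)) {p : ℝ × ℝ} (hp : p ∈ slitSet) :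
    fderiv ℝ (comb l) p (0, 1) = comb (dyL l) p := by
  induction l with
  | nil =>
      have : comb ([] : List (ℂ × ℝ × ℝ)) = fun _ => (0 : ℂ) := by funext q; rfl
      rw [this, fderiv_fun_const]; simp [dyL, comb]
  | cons t l ih =>
      have he : comb (t :: l) = fun q => t.1 * Mab t.2.1 t.2.2 q + comb l q := by
        funext q; exact comb_cons t l q
      rw [he, fderiv_fun_add (((diff_Mab _ _ hp).const_mul _)) (diff_comb l hp),
        fderiv_const_mul (diff_Mab _ _ hp)]
      simp only [ContinuousLinearMap.add_apply, ContinuousLinearMap.smul_apply, smul_eq_mul]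
      rw [pdy_Mab _ _ hp, ih]
      have : dyL (t :: l) = (t.1 * (t.2.1 : ℂ) * Complex.I, t.2.1 - 1, t.2.2)
          :: (-(t.1 * (t.2.2 : ℂ) * Complex.I), t.2.1, t.2.2 - 1) :: dyL l := by
        simp [dyL]
      rw [this, comb_cons, comb_cons]
      ring

lemma cpow_polar {z : ℂ} (hz : z ≠ 0) (a : ℝ) :
    z ^ (a : ℂ) = ((‖z‖ ^ a : ℝ) : ℂ) * Complex.exp (((a * z.arg : ℝ)) * Complex.I) := by
  have hR : (0 : ℝ) < ‖z‖ := norm_pos_iff.mpr hz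
  rw [Complex.cpow_def_of_ne_zero hz]
  have hlog : Complex.log z = (Real.log (‖z‖) : ℂ) + (z.arg : ℝ) * Complex.I := rfl
  rw [hlog]
  have : ((Real.log (‖z‖) : ℂ) + (z.arg : ℝ) * Complex.I) * (a : ℂ)
      = ((Real.log (‖z‖) * a : ℝ) : ℂ) + ((a * z.arg : ℝ) : ℂ) * Complex.I := by
    push_cast; ring
  rw [this, Complex.exp_add, ← Complex.ofReal_exp, ← Real.rpow_def_of_pos hR]

lemma Mab_polar (a b : ℝ) {p : ℝ × ℝ} (hp : p ∈ slitSet) :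
    Mab a b p = ((‖Zc p‖ ^ (a + b) : ℝ) : ℂ)
      * Complex.exp ((((a - b) * (Zc p).arg : ℝ)) * Complex.I) := by
  have hz := Zc_ne_zero hp
  have hR : (0 : ℝ) < ‖Zc p‖ := norm_pos_iff.mpr hz
  rw [Mab, cpow_polar hz a, cpow_polar hz b]
  rw [map_mul, Complex.conj_ofReal, ← Complex.exp_conj]
  have hc : (starRingEnd ℂ) (((b * (Zc p).arg : ℝ)) * Complex.I)
      = ((-(b * (Zc p).arg) : ℝ) : ℂ) * Complex.I := by
    simp [Complex.conj_ofReal]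
  rw [hc, mul_mul_mul_comm, ← Complex.ofReal_mul, ← Real.rpow_add hR, ← Complex.exp_add]
  congr 2
  push_cast
  ring

lemma Mab_re (a b : ℝ) {p : ℝ × ℝ} (hp : p ∈ slitSet) :
    (Mab a b p).re = ‖Zc p‖ ^ (a + b) * Real.cos ((a - b) * (Zc p).arg) := by
  rw [Mab_polar a b hp, Complex.re_ofReal_mul, Complex.exp_ofReal_mul_I_re]

lemma Mab_im (a b : ℝ) {p : ℝ × ℝ} (hp : p ∈ slitSet) :
    (Mab a b p).im = ‖Zc p‖ ^ (a + b) * Real.sin ((a - b) * (Zc p).arg) := by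
  rw [Mab_polar a b hp, Complex.im_ofReal_mul, Complex.exp_ofReal_mul_I_im]

lemma absZc (p : ℝ × ℝ) : ‖Zc p‖ = Real.sqrt (p.1 ^ 2 + p.2 ^ 2) := by
  rw [Complex.norm_def, Complex.normSq_apply]
  simp only [Zc_re, Zc_im]
  ring_nf


lemma fderiv_congr_slit {f g : ℝ × ℝ → ℝ} (h : ∀ q ∈ slitSet, f q = g q) {p : ℝ × ℝ}
    (hp : p ∈ slitSet) : fderiv ℝ f p = fderiv ℝ g p :=
  Filter.EventuallyEq.fderiv_eq (Filter.eventuallyEq_of_mem (isOpen_slitSet.mem_nhds hp) h)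

lemma pd1R_re (F : ℝ × ℝ → ℂ) {p : ℝ × ℝ} (hF : DifferentiableAt ℝ F p) :
    pd1R (fun q => (F q).re) p = (fderiv ℝ F p (1, 0)).re := by
  have h : HasFDerivAt (fun q => (F q).re) (Complex.reCLM.comp (fderiv ℝ F p)) p :=
    (Complex.reCLM.hasFDerivAt).comp p hF.hasFDerivAt
  rw [pd1R, h.fderiv]; rfl

lemma pd1R_im (F : ℝ × ℝ → ℂ) {p : ℝ × ℝ} (hF : DifferentiableAt ℝ F p) :
    pd1R (fun q => (F q).im) p = (fderiv ℝ F p (1, 0)).im := by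
  have h : HasFDerivAt (fun q => (F q).im) (Complex.imCLM.comp (fderiv ℝ F p)) p :=
    (Complex.imCLM.hasFDerivAt).comp p hF.hasFDerivAt
  rw [pd1R, h.fderiv]; rfl

lemma pd2R_re (F : ℝ × ℝ → ℂ) {p : ℝ × ℝ} (hF : DifferentiableAt ℝ F p) :
    pd2R (fun q => (F q).re) p = (fderiv ℝ F p (0, 1)).re := by
  have h : HasFDerivAt (fun q => (F q).re) (Complex.reCLM.comp (fderiv ℝ F p)) p :=
    (Complex.reCLM.hasFDerivAt).comp p hF.hasFDerivAt
  rw [pd2R, h.fderiv]; rfl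

lemma pd2R_im (F : ℝ × ℝ → ℂ) {p : ℝ × ℝ} (hF : DifferentiableAt ℝ F p) :
    pd2R (fun q => (F q).im) p = (fderiv ℝ F p (0, 1)).im := by
  have h : HasFDerivAt (fun q => (F q).im) (Complex.imCLM.comp (fderiv ℝ F p)) p :=
    (Complex.imCLM.hasFDerivAt).comp p hF.hasFDerivAt
  rw [pd2R, h.fderiv]; rfl

lemma pd1R_comb_re (l : List (ℂ × ℝ × ℝ)) (f : ℝ × ℝ → ℝ)
    (hf : ∀ q ∈ slitSet, f q = (comb l q).re) {p : ℝ × ℝ} (hp : p ∈ slitSet) :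
    pd1R f p = (comb (dxL l) p).re := by
  rw [pd1R, fderiv_congr_slit hf hp, ← pd1R, pd1R_re _ (diff_comb l hp), pdx_comb l hp]

lemma pd1R_comb_im (l : List (ℂ × ℝ × ℝ)) (f : ℝ × ℝ → ℝ)
    (hf : ∀ q ∈ slitSet, f q = (comb l q).im) {p : ℝ × ℝ} (hp : p ∈ slitSet) :
    pd1R f p = (comb (dxL l) p).im := by
  rw [pd1R, fderiv_congr_slit hf hp, ← pd1R, pd1R_im _ (diff_comb l hp), pdx_comb l hp]

lemma pd2R_comb_re (l : List (ℂ × ℝ × ℝ)) (f : ℝ × ℝ → ℝ)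
    (hf : ∀ q ∈ slitSet, f q = (comb l q).re) {p : ℝ × ℝ} (hp : p ∈ slitSet) :
    pd2R f p = (comb (dyL l) p).re := by
  rw [pd2R, fderiv_congr_slit hf hp, ← pd2R, pd2R_re _ (diff_comb l hp), pdy_comb l hp]

lemma pd2R_comb_im (l : List (ℂ × ℝ × ℝ)) (f : ℝ × ℝ → ℝ)
    (hf : ∀ q ∈ slitSet, f q = (comb l q).im) {p : ℝ × ℝ} (hp : p ∈ slitSet) :
    pd2R f p = (comb (dyL l) p).im := by
  rw [pd2R, fderiv_congr_slit hf hp, ← pd2R, pd2R_im _ (diff_comb l hp), pdy_comb l hp]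

noncomputable def scL (c : ℂ) (l : List (ℂ × ℝ × ℝ)) : List (ℂ × ℝ × ℝ) :=
  l.map fun t => (c * t.1, t.2)

lemma comb_scL (c : ℂ) (l : List (ℂ × ℝ × ℝ)) (p : ℝ × ℝ) :
    comb (scL c l) p = c * comb l p := by
  induction l with
  | nil => simp [comb, scL]
  | cons t l ih =>
      have h1 : scL c (t :: l) = (c * t.1, t.2) :: scL c l := rfl
      rw [h1, comb_cons, comb_cons, ih]; ring

lemma comb_append (l1 l2 : List (ℂ × ℝ × ℝ)) (p : ℝ × ℝ) :
    comb (l1 ++ l2) p = comb l1 p + comb l2 p := by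
  simp [comb]


noncomputable def l0 (κ : ℝ) (k : ℕ) : List (ℂ × ℝ × ℝ) :=
  [((κ : ℝ), (k : ℝ) / 2, 0),
   ((-((k : ℝ) / 2) : ℝ), 1, (k : ℝ) / 2 - 1),
   ((((k : ℝ) / 2 + (-1 : ℝ) ^ k : ℝ)), 0, (k : ℝ) / 2)]

lemma uphi_comp1 (κ : ℝ) (k : ℕ) {p : ℝ × ℝ} (hp : p ∈ slitSet) :
    (uphi κ k p).1 = (comb (l0 κ k) p).re := by
  have harg : Complex.arg ((p.1 : ℂ) + (p.2 : ℂ) * Complex.I) = (Zc p).arg := rfl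
  have hsq : Real.sqrt (p.1 ^ 2 + p.2 ^ 2) = ‖Zc p‖ := (absZc p).symm
  set c : ℝ := (k : ℝ) / 2 with hc
  set θ : ℝ := (Zc p).arg with hθ
  set R : ℝ := ‖Zc p‖ with hR
  rw [uphi, phik, Prod.smul_fst, harg, hsq, smul_eq_mul]
  rw [l0, comb_cons, comb_cons, comb_cons, comb_nil, add_zero]
  simp only [Complex.add_re, Complex.re_ofReal_mul]
  rw [Mab_re _ _ hp, Mab_re _ _ hp, Mab_re _ _ hp]
  rw [show c + 0 = c by ring, show (1 : ℝ) + (c - 1) = c by ring, show (0 : ℝ) + c = c by ring]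
  rw [show (c - 0) * θ = (k : ℝ) * θ / 2 by rw [hc]; ring,
    show ((1 : ℝ) - (c - 1)) * θ = -((c - 2) * θ) by ring,
    show ((0 : ℝ) - c) * θ = -((k : ℝ) * θ / 2) by rw [hc]; ring,
    Real.cos_neg, Real.cos_neg]
  ring

lemma uphi_comp2 (κ : ℝ) (k : ℕ) {p : ℝ × ℝ} (hp : p ∈ slitSet) :
    (uphi κ k p).2 = (comb (l0 κ k) p).im := by
  have harg : Complex.arg ((p.1 : ℂ) + (p.2 : ℂ) * Complex.I) = (Zc p).arg := rfl
  have hsq : Real.sqrt (p.1 ^ 2 + p.2 ^ 2) = ‖Zc p‖ := (absZc p).symm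
  set c : ℝ := (k : ℝ) / 2 with hc
  set θ : ℝ := (Zc p).arg with hθ
  set R : ℝ := ‖Zc p‖ with hR
  rw [uphi, phik, Prod.smul_snd, harg, hsq, smul_eq_mul]
  rw [l0, comb_cons, comb_cons, comb_cons, comb_nil, add_zero]
  simp only [Complex.add_im, Complex.im_ofReal_mul]
  rw [Mab_im _ _ hp, Mab_im _ _ hp, Mab_im _ _ hp]
  rw [show c + 0 = c by ring, show (1 : ℝ) + (c - 1) = c by ring, show (0 : ℝ) + c = c by ring]
  rw [show (c - 0) * θ = (k : ℝ) * θ / 2 by rw [hc]; ring,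
    show ((1 : ℝ) - (c - 1)) * θ = -((c - 2) * θ) by ring,
    show ((0 : ℝ) - c) * θ = -((k : ℝ) * θ / 2) by rw [hc]; ring,
    Real.sin_neg, Real.sin_neg]
  ring

lemma contDiffAt_Zc (p : ℝ × ℝ) : ContDiffAt ℝ ⊤ Zc p := by
  have h : Zc = fun q => Lc q := by
    funext q; rw [Lc_apply]; rfl
  rw [h]
  exact Lc.contDiff.contDiffAt

lemma contDiffAt_powZ (a : ℝ) {p : ℝ × ℝ} (hp : p ∈ slitSet) :
    ContDiffAt ℝ ⊤ (fun q => Zc q ^ (a : ℂ)) p := by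
  have h1 : AnalyticAt ℂ (fun z : ℂ => z ^ (a : ℂ)) (Zc p) :=
    (analyticAt_id).cpow analyticAt_const (slit_iff.mp hp)
  exact (h1.contDiffAt.restrict_scalars ℝ).comp p (contDiffAt_Zc p)

lemma contDiffAt_Mab (a b : ℝ) {p : ℝ × ℝ} (hp : p ∈ slitSet) :
    ContDiffAt ℝ ⊤ (Mab a b) p := by
  have h2 : ContDiffAt ℝ ⊤ (fun q => (starRingEnd ℂ) (Zc q ^ (b : ℂ))) p :=
    (Complex.conjCLE.toContinuousLinearMap.contDiff.contDiffAt).comp p (contDiffAt_powZ b hp)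
  exact (contDiffAt_powZ a hp).mul h2

lemma contDiffOn_comb (l : List (ℂ × ℝ × ℝ)) : ContDiffOn ℝ ⊤ (comb l) slitSet := by
  induction l with
  | nil =>
      have : comb ([] : List (ℂ × ℝ × ℝ)) = fun _ => (0 : ℂ) := by funext q; rfl
      rw [this]; exact contDiffOn_const
  | cons t l ih =>
      have he : comb (t :: l) = fun q => t.1 * Mab t.2.1 t.2.2 q + comb l q := by
        funext q; exact comb_cons t l q
      rw [he]
      intro p hp
      exact ((contDiffAt_const.mul (contDiffAt_Mab t.2.1 t.2.2 hp)).add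
        ((ih p hp).contDiffAt (isOpen_slitSet.mem_nhds hp))).contDiffWithinAt

lemma contDiffOn_uphi (κ : ℝ) (k : ℕ) : ContDiffOn ℝ (⊤ : ℕ∞) (uphi κ k) slitSet := by
  have h : ContDiffOn ℝ ⊤ (fun p => ((comb (l0 κ k) p).re, (comb (l0 κ k) p).im)) slitSet := by
    apply ContDiffOn.prodMk
    · exact (Complex.reCLM.contDiff.comp_contDiffOn (contDiffOn_comb (l0 κ k))).congr
        fun q _ => by simp [Function.comp]
    · exact (Complex.imCLM.contDiff.comp_contDiffOn (contDiffOn_comb (l0 κ k))).congr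
        fun q _ => by simp [Function.comp]
  exact (h.congr fun q hq => Prod.ext (uphi_comp1 κ k hq) (uphi_comp2 κ k hq)).of_le le_top


set_option maxHeartbeats 4000000 in
theorem stmt11 (μ lam : ℝ) (hμ : 0 < μ) (hlm : 0 < lam + μ) (k : ℕ) :
    ContDiffOn ℝ (⊤ : ℕ∞) (uphi ((lam + 3 * μ) / (lam + μ)) k) slitSet ∧
    ∀ p ∈ slitSet,
      (μ * (pd1R (pd1R (fun q => (uphi ((lam + 3 * μ) / (lam + μ)) k q).1)) p
            + pd2R (pd2R (fun q => (uphi ((lam + 3 * μ) / (lam + μ)) k q).1)) p)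
        + (lam + μ) * pd1R (divR (uphi ((lam + 3 * μ) / (lam + μ)) k)) p = 0) ∧
      (μ * (pd1R (pd1R (fun q => (uphi ((lam + 3 * μ) / (lam + μ)) k q).2)) p
            + pd2R (pd2R (fun q => (uphi ((lam + 3 * μ) / (lam + μ)) k q).2)) p)
        + (lam + μ) * pd2R (divR (uphi ((lam + 3 * μ) / (lam + μ)) k)) p = 0) := by
  set κ : ℝ := (lam + 3 * μ) / (lam + μ) with hκ
  refine ⟨contDiffOn_uphi κ k, ?_⟩
  intro p hp
  set L : List (ℂ × ℝ × ℝ) := l0 κ k with hL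
  set D : List (ℂ × ℝ × ℝ) := dxL L ++ scL (-Complex.I) (dyL L) with hD
  have h1 : ∀ q ∈ slitSet, (uphi κ k q).1 = (comb L q).re := fun q hq => uphi_comp1 κ k hq
  have h2 : ∀ q ∈ slitSet, (uphi κ k q).2 = (comb L q).im := fun q hq => uphi_comp2 κ k hq
  have hA1 : ∀ q ∈ slitSet, pd1R (fun r => (uphi κ k r).1) q = (comb (dxL L) q).re :=
    fun q hq => pd1R_comb_re L _ h1 hq
  have hB1 : ∀ q ∈ slitSet, pd2R (fun r => (uphi κ k r).1) q = (comb (dyL L) q).re :=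
    fun q hq => pd2R_comb_re L _ h1 hq
  have hA2 : ∀ q ∈ slitSet, pd1R (fun r => (uphi κ k r).2) q = (comb (dxL L) q).im :=
    fun q hq => pd1R_comb_im L _ h2 hq
  have hB2 : ∀ q ∈ slitSet, pd2R (fun r => (uphi κ k r).2) q = (comb (dyL L) q).im :=
    fun q hq => pd2R_comb_im L _ h2 hq
  have hdiv : ∀ q ∈ slitSet, divR (uphi κ k) q = (comb D q).re := by
    intro q hq
    rw [divR, hA1 q hq, hB2 q hq, hD, comb_append, comb_scL]
    simp
  have e11 : pd1R (pd1R (fun r => (uphi κ k r).1)) p = (comb (dxL (dxL L)) p).re :=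
    pd1R_comb_re (dxL L) _ hA1 hp
  have e12 : pd2R (pd2R (fun r => (uphi κ k r).1)) p = (comb (dyL (dyL L)) p).re :=
    pd2R_comb_re (dyL L) _ hB1 hp
  have e21 : pd1R (pd1R (fun r => (uphi κ k r).2)) p = (comb (dxL (dxL L)) p).im :=
    pd1R_comb_im (dxL L) _ hA2 hp
  have e22 : pd2R (pd2R (fun r => (uphi κ k r).2)) p = (comb (dyL (dyL L)) p).im :=
    pd2R_comb_im (dyL L) _ hB2 hp
  have ed1 : pd1R (divR (uphi κ k)) p = (comb (dxL D) p).re :=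
    pd1R_comb_re D _ hdiv hp
  have ed2 : pd2R (divR (uphi κ k)) p = (comb (dyL D) p).re :=
    pd2R_comb_re D _ hdiv hp
  constructor
  · rw [e11, e12, ed1]
    simp only [hD, hL, l0, dxL, dyL, scL, List.flatMap_cons, List.flatMap_nil, List.map_cons,
      List.map_nil, List.append_nil, List.nil_append, List.cons_append, List.append_assoc,
      comb_cons, comb_nil, comb_append]
    simp only [Complex.add_re, Complex.mul_re, Complex.mul_im, Complex.I_re, Complex.I_im,
      Complex.ofReal_re, Complex.ofReal_im, Complex.neg_re, Complex.neg_im, Complex.add_im,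
      Mab_re _ _ hp, Mab_im _ _ hp, Complex.zero_re, Complex.zero_im]
    have s1 : (k:ℝ)/2 - 1 - 1 + 0 = (k:ℝ)/2 - 2 := by ring
    have s2 : (k:ℝ)/2 - 1 + (0 - 1) = (k:ℝ)/2 - 2 := by ring
    have s3 : (k:ℝ)/2 + (0 - 1 - 1) = (k:ℝ)/2 - 2 := by ring
    have s4 : 1 - 1 - 1 + ((k:ℝ)/2 - 1) = (k:ℝ)/2 - 2 := by ring
    have s5 : 1 - 1 + ((k:ℝ)/2 - 1 - 1) = (k:ℝ)/2 - 2 := by ring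
    have s6 : 1 + ((k:ℝ)/2 - 1 - 1 - 1) = (k:ℝ)/2 - 2 := by ring
    have s7 : 0 - 1 - 1 + (k:ℝ)/2 = (k:ℝ)/2 - 2 := by ring
    have s8 : 0 - 1 + ((k:ℝ)/2 - 1) = (k:ℝ)/2 - 2 := by ring
    have s9 : 0 + ((k:ℝ)/2 - 1 - 1) = (k:ℝ)/2 - 2 := by ring
    have a1 : ((k:ℝ)/2 - 1 - 1 - 0) * (Zc p).arg = ((k:ℝ)/2 - 2) * (Zc p).arg := by ring
    have a2 : ((k:ℝ)/2 - 1 - (0 - 1)) * (Zc p).arg = ((k:ℝ)/2) * (Zc p).arg := by ring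
    have a3 : ((k:ℝ)/2 - (0 - 1 - 1)) * (Zc p).arg = ((k:ℝ)/2 + 2) * (Zc p).arg := by ring
    have a4 : (1 - 1 - 1 - ((k:ℝ)/2 - 1)) * (Zc p).arg = -(((k:ℝ)/2) * (Zc p).arg) := by ring
    have a5 : (1 - 1 - ((k:ℝ)/2 - 1 - 1)) * (Zc p).arg = -((((k:ℝ)/2 - 2)) * (Zc p).arg) := by
      ring
    have a7 : (0 - 1 - 1 - (k:ℝ)/2) * (Zc p).arg = -((((k:ℝ)/2 + 2)) * (Zc p).arg) := by ring
    have a8 : (0 - 1 - ((k:ℝ)/2 - 1)) * (Zc p).arg = -(((k:ℝ)/2) * (Zc p).arg) := by ring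
    have a9 : (0 - ((k:ℝ)/2 - 1 - 1)) * (Zc p).arg = -((((k:ℝ)/2 - 2)) * (Zc p).arg) := by ring
    simp only [s1, s2, s3, s4, s5, s6, s7, s8, s9, a1, a2, a3, a4, a5, a7, a8, a9,
      Real.cos_neg, Real.sin_neg]
    rw [hκ]
    field_simp
    ring
  · rw [e21, e22, ed2]
    simp only [hD, hL, l0, dxL, dyL, scL, List.flatMap_cons, List.flatMap_nil, List.map_cons,
      List.map_nil, List.append_nil, List.nil_append, List.cons_append, List.append_assoc,
      comb_cons, comb_nil, comb_append]
    simp only [Complex.add_re, Complex.mul_re, Complex.mul_im, Complex.I_re, Complex.I_im,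
      Complex.ofReal_re, Complex.ofReal_im, Complex.neg_re, Complex.neg_im, Complex.add_im,
      Mab_re _ _ hp, Mab_im _ _ hp, Complex.zero_re, Complex.zero_im]
    have s1 : (k:ℝ)/2 - 1 - 1 + 0 = (k:ℝ)/2 - 2 := by ring
    have s2 : (k:ℝ)/2 - 1 + (0 - 1) = (k:ℝ)/2 - 2 := by ring
    have s3 : (k:ℝ)/2 + (0 - 1 - 1) = (k:ℝ)/2 - 2 := by ring
    have s4 : 1 - 1 - 1 + ((k:ℝ)/2 - 1) = (k:ℝ)/2 - 2 := by ring
    have s5 : 1 - 1 + ((k:ℝ)/2 - 1 - 1) = (k:ℝ)/2 - 2 := by ring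
    have s6 : 1 + ((k:ℝ)/2 - 1 - 1 - 1) = (k:ℝ)/2 - 2 := by ring
    have s7 : 0 - 1 - 1 + (k:ℝ)/2 = (k:ℝ)/2 - 2 := by ring
    have s8 : 0 - 1 + ((k:ℝ)/2 - 1) = (k:ℝ)/2 - 2 := by ring
    have s9 : 0 + ((k:ℝ)/2 - 1 - 1) = (k:ℝ)/2 - 2 := by ring
    have a1 : ((k:ℝ)/2 - 1 - 1 - 0) * (Zc p).arg = ((k:ℝ)/2 - 2) * (Zc p).arg := by ring
    have a2 : ((k:ℝ)/2 - 1 - (0 - 1)) * (Zc p).arg = ((k:ℝ)/2) * (Zc p).arg := by ring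
    have a3 : ((k:ℝ)/2 - (0 - 1 - 1)) * (Zc p).arg = ((k:ℝ)/2 + 2) * (Zc p).arg := by ring
    have a4 : (1 - 1 - 1 - ((k:ℝ)/2 - 1)) * (Zc p).arg = -(((k:ℝ)/2) * (Zc p).arg) := by ring
    have a5 : (1 - 1 - ((k:ℝ)/2 - 1 - 1)) * (Zc p).arg = -((((k:ℝ)/2 - 2)) * (Zc p).arg) := by
      ring
    have a7 : (0 - 1 - 1 - (k:ℝ)/2) * (Zc p).arg = -((((k:ℝ)/2 + 2)) * (Zc p).arg) := by ring
    have a8 : (0 - 1 - ((k:ℝ)/2 - 1)) * (Zc p).arg = -(((k:ℝ)/2) * (Zc p).arg) := by ring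
    have a9 : (0 - ((k:ℝ)/2 - 1 - 1)) * (Zc p).arg = -((((k:ℝ)/2 - 2)) * (Zc p).arg) := by ring
    simp only [s1, s2, s3, s4, s5, s6, s7, s8, s9, a1, a2, a3, a4, a5, a7, a8, a9,
      Real.cos_neg, Real.sin_neg]
    rw [hκ]
    field_simp
    ring
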